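/- arXiv:1709.04994 — 2 statements merged into one kernel-verified Lean document; each statement's English description precedes it below -/
import Mathlib

section
/- For λ in the upper half-plane, the function v defined by v(x) = α e^{i√λ x} + ᾱ e^{-i√λ x} for x ≥ 0 and v(x) = e^{√λ x} for x < 0, where α = (1 - i)/2, is continuously differentiable on ℝ and satisfies -v''(x) = λ·sgn(x)·v(x) for all x ≠ 0. -/
open Complex Set

noncomputable def sqC (l : ℂ) : ℂ := l ^ (1/2 : ℂ)

noncomputable def alphaC : ℂ := (1 - Complex.I) / 2

lemma hasDerivAt_cexp_mul (c : ℂ) (x : ℝ) :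
    HasDerivAt (fun x : ℝ => Complex.exp (c * x)) (c * Complex.exp (c * x)) x := by
  have h0 : HasDerivAt (fun z : ℂ => c * z) c (x : ℂ) := by
    simpa using (hasDerivAt_id' (x : ℂ)).const_mul c
  simpa [mul_comm] using h0.comp_ofReal.cexp

/-- The function v (v(x) = αe^{i√λ x} + ᾱe^{-i√λ x} for x ≥ 0, v(x) = e^{√λ x} for x < 0)
is continuously differentiable on ℝ and satisfies -v'' = λ·sgn·v away from 0. -/
theorem v_solves (l : ℂ) (hl : 0 < l.im) (v : ℝ → ℂ)
    (hv_pos : ∀ x : ℝ, 0 ≤ x →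
      v x = alphaC * Complex.exp (Complex.I * sqC l * x)
        + (starRingEnd ℂ) alphaC * Complex.exp (-(Complex.I * sqC l) * x))
    (hv_neg : ∀ x : ℝ, x < 0 → v x = Complex.exp (sqC l * x)) :
    ContDiff ℝ 1 v ∧
      ∀ x : ℝ, x ≠ 0 → -(deriv (deriv v) x) = l * (Real.sign x : ℂ) * v x := by
  set s := sqC l with hs
  have hl0 : l ≠ 0 := fun h => by simp [h] at hl
  have hs2 : s * s = l := by
    rw [hs, sqC, ← Complex.cpow_add _ _ hl0]
    norm_num
  have hIs : (Complex.I * s) * (Complex.I * s) = -l := by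
    rw [mul_mul_mul_comm, Complex.I_mul_I, hs2]; ring
  set F : ℝ → ℂ := fun x => alphaC * Complex.exp (Complex.I * s * x)
      + (starRingEnd ℂ) alphaC * Complex.exp (-(Complex.I * s) * x) with hF_def
  set G : ℝ → ℂ := fun x => Complex.exp (s * x) with hG_def
  set F' : ℝ → ℂ := fun x => alphaC * (Complex.I * s * Complex.exp (Complex.I * s * x))
      + (starRingEnd ℂ) alphaC * (-(Complex.I * s) * Complex.exp (-(Complex.I * s) * x)) with hF'_def
  set G' : ℝ → ℂ := fun x => s * Complex.exp (s * x) with hG'_def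
  have hconj : (starRingEnd ℂ) alphaC = (1 + Complex.I) / 2 := by
    rw [alphaC, map_div₀, map_sub, map_one, Complex.conj_I, map_ofNat]
    ring
  have hF : ∀ x : ℝ, HasDerivAt F (F' x) x := fun x =>
    ((hasDerivAt_cexp_mul (Complex.I * s) x).const_mul alphaC).add
      ((hasDerivAt_cexp_mul (-(Complex.I * s)) x).const_mul ((starRingEnd ℂ) alphaC))
  have hG : ∀ x : ℝ, HasDerivAt G (G' x) x := fun x => hasDerivAt_cexp_mul s x
  have hF'' : ∀ x : ℝ, HasDerivAt F'
      (alphaC * (Complex.I * s * (Complex.I * s * Complex.exp (Complex.I * s * x)))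
        + (starRingEnd ℂ) alphaC * (-(Complex.I * s) * (-(Complex.I * s) * Complex.exp (-(Complex.I * s) * x)))) x :=
    fun x =>
    (((hasDerivAt_cexp_mul (Complex.I * s) x).const_mul (Complex.I * s)).const_mul alphaC).add
      (((hasDerivAt_cexp_mul (-(Complex.I * s)) x).const_mul (-(Complex.I * s))).const_mul
        ((starRingEnd ℂ) alphaC))
  have hG'' : ∀ x : ℝ, HasDerivAt G' (s * (s * Complex.exp (s * x))) x := fun x =>
    (hasDerivAt_cexp_mul s x).const_mul s
  have hFG0 : F' 0 = G' 0 := by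
    simp only [hF'_def, hG'_def, hconj, Complex.ofReal_zero, mul_zero, Complex.exp_zero,
      mul_one]
    simp only [alphaC]
    linear_combination (-s) * Complex.I_mul_I
  have hvF : ∀ x : ℝ, 0 ≤ x → v x = F x := hv_pos
  have hvG : ∀ x : ℝ, x < 0 → v x = G x := hv_neg
  have hvG' : ∀ x : ℝ, x ≤ 0 → v x = G x := by
    intro x hx
    rcases hx.lt_or_eq with h | rfl
    · exact hvG x h
    · rw [hvF 0 le_rfl]
      simp only [hF_def, hG_def, hconj, Complex.ofReal_zero, mul_zero, Complex.exp_zero,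
        mul_one]
      simp only [alphaC]
      ring
  set w : ℝ → ℂ := fun x => if (0:ℝ) ≤ x then F' x else G' x with hw_def
  have hv : ∀ x : ℝ, HasDerivAt v (w x) x := by
    intro x
    rcases lt_trichotomy x 0 with hx | rfl | hx
    · have hwx : w x = G' x := if_neg (not_le.mpr hx)
      rw [hwx]
      apply (hG x).congr_of_eventuallyEq
      filter_upwards [Iio_mem_nhds hx] with y hy
      exact hvG y hy
    · have h1 : HasDerivWithinAt v (F' 0) (Ici 0) 0 :=
        ((hF 0).hasDerivWithinAt).congr (fun y hy => hvF y hy) (hvF 0 le_rfl)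
      have h2 : HasDerivWithinAt v (F' 0) (Iic 0) 0 := by
        rw [hFG0]
        exact ((hG 0).hasDerivWithinAt).congr (fun y hy => hvG' y hy) (hvG' 0 le_rfl)
      have h3 := h2.union h1
      rw [Iic_union_Ici] at h3
      have hw0 : w 0 = F' 0 := if_pos le_rfl
      rw [hw0]
      exact h3.hasDerivAt (by simp)
    · have hwx : w x = F' x := if_pos hx.le
      rw [hwx]
      apply (hF x).congr_of_eventuallyEq
      filter_upwards [Ioi_mem_nhds hx] with y hy
      exact hvF y hy.le
  have hderiv : deriv v = w := funext fun x => (hv x).deriv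
  have hcontw : Continuous w := by
    apply Continuous.if_le _ _ continuous_const continuous_id
    · intro x hx
      obtain rfl : (0 : ℝ) = x := hx
      exact hFG0
    · exact continuous_iff_continuousAt.mpr fun x => (hF'' x).continuousAt
    · exact continuous_iff_continuousAt.mpr fun x => (hG'' x).continuousAt
  constructor
  · exact contDiff_one_iff_deriv.mpr ⟨fun x => (hv x).differentiableAt, hderiv ▸ hcontw⟩
  · intro x hx
    rw [hderiv]
    rcases hx.lt_or_gt with hx | hx
    · have hev : w =ᶠ[nhds x] G' := by
        filter_upwards [Iio_mem_nhds hx] with y hy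
        exact if_neg (not_le.mpr hy)
      rw [hev.deriv_eq, (hG'' x).deriv, hvG x hx, Real.sign_of_neg hx]
      push_cast
      rw [hG_def]
      linear_combination (-(Complex.exp (s * (x:ℂ)))) * hs2
    · have hev : w =ᶠ[nhds x] F' := by
        filter_upwards [Ioi_mem_nhds hx] with y hy
        exact if_pos hy.le
      rw [hev.deriv_eq, (hF'' x).deriv, hvF x hx.le, Real.sign_of_pos hx]
      push_cast
      linear_combination (-(alphaC * Complex.exp (Complex.I * s * x)
        + (starRingEnd ℂ) alphaC * Complex.exp (-(Complex.I * s) * x))) * hIs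
end

section
/- Under the assumptions of the previous statement (eigenfunction f of sgn(·)(-d²/dx² + q) with non-real eigenvalue λ, f and f' vanishing at ±∞), one has ∫_ℝ sgn(t)|f(t)|² dt = 0 and ∫_ℝ (|f'(t)|² + q(t)|f(t)|²) dt = 0, i.e. lim_{x→-∞} U(x) = 0 and lim_{x→-∞} V(x) = 0. -/
open MeasureTheory Filter Topology

lemma measurable_realSign : Measurable Real.sign := by
  unfold Real.sign
  exact Measurable.ite (measurableSet_lt measurable_id measurable_const) measurable_const
    (Measurable.ite (measurableSet_lt measurable_const measurable_id) measurable_const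
      measurable_const)

lemma integral_deriv_eq_zero_of_tendsto (g g' : ℝ → ℂ)
    (hderiv : ∀ x, HasDerivAt g (g' x) x) (hint : Integrable g')
    (htop : Tendsto g atTop (𝓝 0)) (hbot : Tendsto g atBot (𝓝 0)) :
    ∫ x : ℝ, g' x = 0 := by
  rw [← intervalIntegral.integral_Iic_add_Ioi (b := (0:ℝ)) hint.integrableOn hint.integrableOn,
    integral_Iic_of_hasDerivAt_of_tendsto' (fun x _ => hderiv x) hint.integrableOn hbot,
    integral_Ioi_of_hasDerivAt_of_tendsto' (fun x _ => hderiv x) hint.integrableOn htop]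
  ring

/-- For an eigenfunction f of sgn(·)(-d²/dx² + q) with non-real eigenvalue λ,
vanishing together with f' at ±∞, one has ∫ sgn|f|² = 0 and ∫(|f'|² + q|f|²) = 0. -/
theorem U_V_vanish (q : ℝ → ℝ) (hq : Integrable q)
    (lam : ℂ) (hlam : lam.im ≠ 0) (f : ℝ → ℂ)
    (hf_diff : Differentiable ℝ f) (hf'_diff : Differentiable ℝ (deriv f))
    (hf_L2 : MemLp f 2) (hf'_L2 : MemLp (deriv f) 2)
    (hqf2 : Integrable (fun t => q t * ‖f t‖ ^ 2))
    (hf_top : Tendsto f atTop (𝓝 0)) (hf_bot : Tendsto f atBot (𝓝 0))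
    (hf'_top : Tendsto (deriv f) atTop (𝓝 0))
    (hf'_bot : Tendsto (deriv f) atBot (𝓝 0))
    (heig : ∀ᵐ t : ℝ,
      (Real.sign t : ℂ) * (-(deriv (deriv f) t) + (q t : ℂ) * f t) = lam * f t) :
    (∫ t : ℝ, Real.sign t * ‖f t‖ ^ 2) = 0 ∧
      (∫ t : ℝ, (‖deriv f t‖ ^ 2 + q t * ‖f t‖ ^ 2)) = 0 := by
  -- integrability of |f|² and |f'|²
  have hsq : Integrable (fun t => ‖f t‖ ^ 2) := by
    have := hf_L2.integrable_norm_rpow two_ne_zero ENNReal.ofNat_ne_top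
    simpa [ENNReal.toReal_ofNat, Real.rpow_natCast] using this
  have hsq' : Integrable (fun t => ‖deriv f t‖ ^ 2) := by
    have := hf'_L2.integrable_norm_rpow two_ne_zero ENNReal.ofNat_ne_top
    simpa [ENNReal.toReal_ofNat, Real.rpow_natCast] using this
  -- integrability of sign·|f|²
  have hsgn : Integrable (fun t => Real.sign t * ‖f t‖ ^ 2) := by
    refine hsq.mono' ((measurable_realSign.aestronglyMeasurable).mul
      hsq.aestronglyMeasurable) ?_
    filter_upwards with t
    have h1 : |Real.sign t| ≤ 1 := by
      rcases Real.sign_apply_eq t with h | h | h <;> simp [h]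
    calc ‖Real.sign t * ‖f t‖ ^ 2‖ = |Real.sign t| * ‖f t‖ ^ 2 := by
          rw [norm_mul]; simp [abs_of_nonneg (sq_nonneg ‖f t‖)]
      _ ≤ 1 * ‖f t‖ ^ 2 := by
          apply mul_le_mul_of_nonneg_right h1 (sq_nonneg _)
      _ = ‖f t‖ ^ 2 := one_mul _
  -- the derivative of g t = f' t * conj (f t)
  set g : ℝ → ℂ := fun t => deriv f t * (starRingEnd ℂ) (f t) with hgdef
  set g' : ℝ → ℂ := fun t =>
    deriv (deriv f) t * (starRingEnd ℂ) (f t)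
      + deriv f t * (starRingEnd ℂ) (deriv f t) with hg'def
  have hderiv : ∀ t, HasDerivAt g (g' t) t := fun t =>
    ((hf'_diff t).hasDerivAt).mul ((hf_diff t).hasDerivAt.star)
  -- a.e. identity for g'
  have h0 : ∀ᵐ t : ℝ, t ≠ 0 := by
    rw [ae_iff]
    simp
  set h : ℝ → ℂ := fun t =>
    ((q t * ‖f t‖ ^ 2 : ℝ) : ℂ) - lam * ((Real.sign t * ‖f t‖ ^ 2 : ℝ) : ℂ)
      + ((‖deriv f t‖ ^ 2 : ℝ) : ℂ) with hhdef
  have hae : g' =ᵐ[volume] h := by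
    filter_upwards [heig, h0] with t ht ht0
    have hs : (Real.sign t : ℂ) * (Real.sign t : ℂ) = 1 := by
      rcases Real.sign_apply_eq_of_ne_zero t ht0 with h | h <;> rw [h] <;> norm_num
    -- from the eigenvalue equation: f'' = q f - λ sign f
    have h2 : deriv (deriv f) t = (q t : ℂ) * f t - lam * (Real.sign t : ℂ) * f t := by
      have := congrArg (fun z => (Real.sign t : ℂ) * z) ht
      rw [← mul_assoc, hs, one_mul] at this
      linear_combination -this
    have hmc : f t * (starRingEnd ℂ) (f t) = ((‖f t‖ ^ 2 : ℝ) : ℂ) := by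
      rw [Complex.mul_conj]
      norm_cast
      rw [Complex.normSq_eq_norm_sq]
    have hmc' : deriv f t * (starRingEnd ℂ) (deriv f t) = ((‖deriv f t‖ ^ 2 : ℝ) : ℂ) := by
      rw [Complex.mul_conj]
      norm_cast
      rw [Complex.normSq_eq_norm_sq]
    simp only [hg'def, hhdef, h2]
    push_cast at hmc hmc' ⊢
    linear_combination ((q t : ℂ) - lam * (Real.sign t : ℂ)) * hmc + hmc'
  have hint_h : Integrable h :=
    ((hqf2.ofReal).sub ((hsgn.ofReal).const_mul lam)).add (hsq'.ofReal)
  have hint_g' : Integrable g' := hint_h.congr hae.symm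
  -- g tends to 0 at ±∞
  have hgtop : Tendsto g atTop (𝓝 0) := by
    have := hf'_top.mul ((Complex.continuous_conj.tendsto 0).comp hf_top)
    simpa using this
  have hgbot : Tendsto g atBot (𝓝 0) := by
    have := hf'_bot.mul ((Complex.continuous_conj.tendsto 0).comp hf_bot)
    simpa using this
  have hzero : ∫ t : ℝ, g' t = 0 :=
    integral_deriv_eq_zero_of_tendsto g g' hderiv hint_g' hgtop hgbot
  have hinth : ∫ t : ℝ, h t = 0 := by
    rw [← integral_congr_ae hae, hzero]
  -- compute the integral of h
  have hsplit : ∫ t : ℝ, h t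
      = ((∫ t : ℝ, q t * ‖f t‖ ^ 2 : ℝ) : ℂ)
        - lam * ((∫ t : ℝ, Real.sign t * ‖f t‖ ^ 2 : ℝ) : ℂ)
        + ((∫ t : ℝ, ‖deriv f t‖ ^ 2 : ℝ) : ℂ) := by
    calc ∫ t : ℝ, h t
        = (∫ t : ℝ, (((q t * ‖f t‖ ^ 2 : ℝ) : ℂ)
              - lam * ((Real.sign t * ‖f t‖ ^ 2 : ℝ) : ℂ)))
            + ∫ t : ℝ, ((‖deriv f t‖ ^ 2 : ℝ) : ℂ) :=
          integral_add ((hqf2.ofReal).sub ((hsgn.ofReal).const_mul lam)) (hsq'.ofReal)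
      _ = ((∫ t : ℝ, ((q t * ‖f t‖ ^ 2 : ℝ) : ℂ))
              - ∫ t : ℝ, lam * ((Real.sign t * ‖f t‖ ^ 2 : ℝ) : ℂ))
            + ∫ t : ℝ, ((‖deriv f t‖ ^ 2 : ℝ) : ℂ) := by
          have h1 : Integrable (fun t : ℝ => ((q t * ‖f t‖ ^ 2 : ℝ) : ℂ)) := hqf2.ofReal
          have h2 : Integrable
              (fun t : ℝ => lam * ((Real.sign t * ‖f t‖ ^ 2 : ℝ) : ℂ)) :=
            (hsgn.ofReal).const_mul lam
          rw [integral_sub h1 h2]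
      _ = _ := by
          rw [integral_const_mul, integral_complex_ofReal, integral_complex_ofReal,
            integral_complex_ofReal]
  rw [hinth] at hsplit
  set A : ℝ := ∫ t : ℝ, q t * ‖f t‖ ^ 2
  set U : ℝ := ∫ t : ℝ, Real.sign t * ‖f t‖ ^ 2
  set B : ℝ := ∫ t : ℝ, ‖deriv f t‖ ^ 2
  have him := congrArg Complex.im hsplit
  simp [Complex.mul_im] at him
  have hU : U = 0 := by
    rcases him with h | h
    · exact absurd h hlam
    · exact h
  have hre := congrArg Complex.re hsplit
  simp [Complex.mul_re, hU] at hre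
  refine ⟨hU, ?_⟩
  rw [integral_add hsq' hqf2]
  linarith
end
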